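/- Let g : [0, π/3] → ℝ be continuous, strictly positive, differentiable on (0, π/3), and possess one-sided derivatives g′₊(0) at 0 and g′₋(π/3) at π/3. Fix k ≠ −1/2 and consider the restriction h(ε) = G(−1 + ε, 1/2 + kε) of G = q/g(θ) to a line through the point (S₁,S₂) = (−1, 1/2), which lies on the axis θ = π/3. Then h has one-sided derivatives at ε = 0 given by h′±(0) = −3/(2g(π/3)) ± (√3/2)·|1 + 2k|·g′₋(π/3)/g(π/3)². Consequently the convexity condition h′₋(0) ≤ h′₊(0) holds for every such line if and only if g′₋(π/3) ≥ 0. -/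

import Mathlib

/-- The deviatoric stress invariant q(S₁,S₂) = √(3(S₁² + S₁S₂ + S₂²)), with S₃ = −S₁−S₂. -/
noncomputable def qf (S : ℝ × ℝ) : ℝ :=
  Real.sqrt (3 * (S.1 ^ 2 + S.1 * S.2 + S.2 ^ 2))

/-- The Lode angle θ(S₁,S₂) = (1/3)·arccos((27/2)·S₁S₂S₃/q³) ∈ [0, π/3], S₃ = −S₁−S₂. -/
noncomputable def θf (S : ℝ × ℝ) : ℝ :=
  (1 / 3) * Real.arccos ((27 / 2) * (S.1 * S.2 * (-S.1 - S.2)) / (qf S) ^ 3)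

/-- The deviatoric yield function G(S₁,S₂) = q(S₁,S₂)/g(θ(S₁,S₂)) (equal to 0 at the
origin, where q = 0). -/
noncomputable def Gf (g : ℝ → ℝ) (S : ℝ × ℝ) : ℝ :=
  qf S / g (θf S)

namespace CornerAux

noncomputable def Ffun (k ε : ℝ) : ℝ := (-1+ε)^2 + (-1+ε)*(1/2+k*ε) + (1/2+k*ε)^2
noncomputable def Pfun (k ε : ℝ) : ℝ := ((-1+ε)*(1/2+k*ε))*(-(-1+ε)-(1/2+k*ε))
noncomputable def Nfun (k ε : ℝ) : ℝ := (-3/2+(1-k)*ε)*(-3/2+(2+k)*ε)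
noncomputable def Ufun (k ε : ℝ) : ℝ := |1+2*k| * ε * Nfun k ε / (2 * Real.sqrt ((Ffun k ε)^3))

lemma key_identity (k ε : ℝ) :
    4 * (Ffun k ε)^3 - 27 * (Pfun k ε)^2 = ((1+2*k)*ε)^2 * (Nfun k ε)^2 := by
  unfold Ffun Pfun Nfun; ring

lemma theta_eq (k ε : ℝ) (hF : 0 < Ffun k ε) (hN : 0 < Nfun k ε) (hP : Pfun k ε < 0) :
    θf (-1+ε, 1/2+k*ε) =
      Real.pi/3 - (1/3) * Real.arcsin (|1+2*k| * |ε| * Nfun k ε / (2 * Real.sqrt ((Ffun k ε)^3))) := by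
  have hq : (0:ℝ) < Real.sqrt (3 * Ffun k ε) := Real.sqrt_pos.2 (by linarith)
  have hq3 : (0:ℝ) < (Real.sqrt (3 * Ffun k ε))^3 := by positivity
  set c : ℝ := (27/2) * Pfun k ε / (Real.sqrt (3 * Ffun k ε))^3 with hc
  have hθ : θf (-1+ε, 1/2+k*ε) = (1/3) * Real.arccos c := by
    simp only [θf, qf]
    norm_num only
    congr 2
    all_goals first
      | (unfold Pfun; ring)
      | (congr 2; unfold Ffun; ring)
  have hcneg : c ≤ 0 := by
    apply div_nonpos_of_nonpos_of_nonneg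
    · nlinarith
    · positivity
  have hsq : ((Real.sqrt (3 * Ffun k ε))^3)^2 = (3 * Ffun k ε)^3 := by
    rw [show ((Real.sqrt (3 * Ffun k ε))^3)^2 = ((Real.sqrt (3 * Ffun k ε))^2)^3 by ring,
      Real.sq_sqrt (by linarith)]
  have h1c : 1 - (-c)^2 = ((1+2*k)*ε)^2 * (Nfun k ε)^2 / (4 * (Ffun k ε)^3) := by
    have hcsq : c^2 = (27/2)^2 * (Pfun k ε)^2 / (3 * Ffun k ε)^3 := by
      rw [hc, div_pow, hsq, mul_pow]
    rw [neg_pow, hcsq, ← key_identity k ε]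
    field_simp
    ring
  have hbase : 0 ≤ |1+2*k| * |ε| * Nfun k ε / (2 * Real.sqrt ((Ffun k ε)^3)) := by positivity
  have hsqrt : Real.sqrt (1 - (-c)^2)
      = |1+2*k| * |ε| * Nfun k ε / (2 * Real.sqrt ((Ffun k ε)^3)) := by
    rw [h1c, show ((1+2*k)*ε)^2 * (Nfun k ε)^2 / (4 * (Ffun k ε)^3)
        = (|1+2*k| * |ε| * Nfun k ε / (2 * Real.sqrt ((Ffun k ε)^3)))^2 by
      rw [div_pow, mul_pow 2, Real.sq_sqrt (by positivity)]
      simp only [mul_pow, sq_abs]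
      ring]
    exact Real.sqrt_sq hbase
  rw [hθ, show c = -(-c) by ring, Real.arccos_neg, Real.arccos_eq_arcsin (by linarith), hsqrt]
  ring

lemma F0 (k : ℝ) : Ffun k 0 = 3/4 := by norm_num [Ffun]
lemma N0 (k : ℝ) : Nfun k 0 = 9/4 := by norm_num [Nfun]
lemma P0 (k : ℝ) : Pfun k 0 = -(1/4) := by norm_num [Pfun]
lemma U0 (k : ℝ) : Ufun k 0 = 0 := by norm_num [Ufun]

lemma hasDerivAt_affine (a b x : ℝ) : HasDerivAt (fun ε : ℝ => a + b * ε) b x := by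
  simpa using ((hasDerivAt_id x).const_mul b).const_add a

lemma hasDerivAt_F (k : ℝ) : HasDerivAt (Ffun k) (-(3/2)) 0 := by
  have h1 : HasDerivAt (fun ε : ℝ => -1 + 1 * ε) 1 0 := hasDerivAt_affine (-1) 1 0
  have h2 : HasDerivAt (fun ε : ℝ => 1/2 + k * ε) k 0 := hasDerivAt_affine (1/2) k 0
  have heq : Ffun k = fun x : ℝ => (-1 + 1*x)^2 + (-1 + 1*x)*(1/2 + k*x) + (1/2 + k*x)^2 := by
    funext x; unfold Ffun; ring
  rw [heq]
  convert ((h1.fun_pow 2).fun_add (h1.fun_mul h2)).fun_add (h2.fun_pow 2) using 1 <;> try with_reducible_and_instances rfl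
  push_cast; ring_nf

lemma hasDerivAt_N (k : ℝ) : HasDerivAt (Nfun k) (-(9/2)) 0 := by
  have h1 : HasDerivAt (fun ε : ℝ => -3/2 + (1-k) * ε) (1-k) 0 := hasDerivAt_affine _ _ 0
  have h2 : HasDerivAt (fun ε : ℝ => -3/2 + (2+k) * ε) (2+k) 0 := hasDerivAt_affine _ _ 0
  have heq : Nfun k = fun y : ℝ => (-3/2 + (1-k)*y) * (-3/2 + (2+k)*y) := rfl
  rw [heq]
  convert h1.fun_mul h2 using 1 <;> try with_reducible_and_instances rfl
  ring_nf

lemma sqrt_F0_cube (k : ℝ) : Real.sqrt ((Ffun k 0)^3) = 3 * Real.sqrt 3 / 8 := by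
  rw [F0, show ((3/4:ℝ))^3 = (3/8)^2 * 3 by norm_num,
    Real.sqrt_mul (by positivity), Real.sqrt_sq (by norm_num)]
  ring

lemma hasDerivAt_U (k : ℝ) : HasDerivAt (Ufun k) (Real.sqrt 3 * |1+2*k|) 0 := by
  have hF := hasDerivAt_F k
  have hN := hasDerivAt_N k
  have hnum : HasDerivAt (fun ε => |1+2*k| * ε * Nfun k ε) (|1+2*k| * (9/4)) 0 := by
    have h1 : HasDerivAt (fun ε : ℝ => |1+2*k| * ε) (|1+2*k|) 0 := by
      simpa using hasDerivAt_affine 0 (|1+2*k|) 0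
    have := h1.fun_mul hN
    convert this using 1 <;> try with_reducible_and_instances rfl
    rw [N0]; norm_num
  have hF3 : HasDerivAt (fun ε => (Ffun k ε)^3) (3 * (Ffun k 0)^2 * (-(3/2))) 0 := by
    simpa [mul_comm] using hF.fun_pow 3
  have hF30 : (Ffun k 0)^3 ≠ 0 := by rw [F0]; norm_num
  have hden : HasDerivAt (fun ε => 2 * Real.sqrt ((Ffun k ε)^3))
      (2 * ((3 * (Ffun k 0)^2 * (-(3/2))) / (2 * Real.sqrt ((Ffun k 0)^3)))) 0 := by
    exact (hF3.sqrt hF30).const_mul 2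
  have hden0 : (2 : ℝ) * Real.sqrt ((Ffun k 0)^3) ≠ 0 := by
    rw [sqrt_F0_cube]
    have h3 : (0:ℝ) < Real.sqrt 3 := Real.sqrt_pos.2 (by norm_num)
    positivity
  have := hnum.fun_div hden hden0
  have hU : Ufun k = fun ε => (|1+2*k| * ε * Nfun k ε) / (2 * Real.sqrt ((Ffun k ε)^3)) := by
    funext ε; rfl
  rw [hU]
  convert this using 1 <;> try with_reducible_and_instances rfl
  have h33 : Real.sqrt 3 * Real.sqrt 3 = 3 := Real.mul_self_sqrt (by norm_num)
  have h3 : (0:ℝ) < Real.sqrt 3 := Real.sqrt_pos.2 (by norm_num)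
  rw [sqrt_F0_cube, N0]
  simp only [mul_zero, zero_mul, sub_zero]
  have hsq : ((2:ℝ)*(3*Real.sqrt 3/8))^2 = 27/16 := by nlinarith [h33]
  rw [hsq]
  field_simp
  ring

lemma eventually_cond (k : ℝ) :
    ∀ᶠ ε in nhds (0:ℝ), 0 < Ffun k ε ∧ 0 < Nfun k ε ∧ Pfun k ε < 0 := by
  have hFc : Continuous (Ffun k) := by unfold Ffun; fun_prop
  have hNc : Continuous (Nfun k) := by unfold Nfun; fun_prop
  have hPc : Continuous (Pfun k) := by unfold Pfun; fun_prop
  have h1 : ∀ᶠ ε in nhds (0:ℝ), Ffun k ε ∈ Set.Ioi (0:ℝ) :=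
    hFc.continuousAt (isOpen_Ioi.mem_nhds (by rw [F0]; norm_num))
  have h2 : ∀ᶠ ε in nhds (0:ℝ), Nfun k ε ∈ Set.Ioi (0:ℝ) :=
    hNc.continuousAt (isOpen_Ioi.mem_nhds (by rw [N0]; norm_num))
  have h3 : ∀ᶠ ε in nhds (0:ℝ), Pfun k ε ∈ Set.Iio (0:ℝ) :=
    hPc.continuousAt (isOpen_Iio.mem_nhds (by rw [P0]; norm_num))
  filter_upwards [h1, h2, h3] with ε a b c
  exact ⟨a, b, c⟩

lemma theta0 (k : ℝ) : θf (-1+(0:ℝ), 1/2+k*0) = Real.pi/3 := by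
  rw [theta_eq k 0 (by rw [F0]; norm_num) (by rw [N0]; norm_num) (by rw [P0]; norm_num)]
  norm_num

lemma theta_le (S : ℝ × ℝ) : θf S ≤ Real.pi / 3 := by
  unfold θf
  have := Real.arccos_le_pi ((27 / 2) * (S.1 * S.2 * (-S.1 - S.2)) / (qf S) ^ 3)
  linarith

lemma hasDerivAt_arcsinU (k : ℝ) :
    HasDerivAt (fun ε => Real.arcsin (Ufun k ε)) (Real.sqrt 3 * |1+2*k|) 0 := by
  have harcsin : HasDerivAt Real.arcsin 1 (Ufun k 0) := by
    rw [U0]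
    simpa using Real.hasDerivAt_arcsin (show (0:ℝ) ≠ -1 by norm_num) (show (0:ℝ) ≠ 1 by norm_num)
  simpa [Function.comp_def] using harcsin.comp 0 (hasDerivAt_U k)

lemma thetaR (k : ℝ) :
    HasDerivWithinAt (fun ε => θf (-1+ε, 1/2+k*ε))
      (-(Real.sqrt 3 * |1+2*k|)/3) (Set.Ici 0) 0 := by
  have hΘ : HasDerivAt (fun ε => Real.pi/3 - (1/3) * Real.arcsin (Ufun k ε))
      (-(Real.sqrt 3 * |1+2*k|)/3) 0 := by
    have := ((hasDerivAt_arcsinU k).const_mul (1/3)).const_sub (Real.pi/3)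
    convert this using 1 <;> try with_reducible_and_instances rfl
    ring
  refine hΘ.hasDerivWithinAt.congr_of_eventuallyEq ?_ ?_
  · have hev := (eventually_cond k).filter_mono (nhdsWithin_le_nhds (s := Set.Ici (0:ℝ)))
    filter_upwards [hev, eventually_mem_nhdsWithin] with ε hc (hε : ε ∈ Set.Ici (0:ℝ))
    obtain ⟨hF, hN, hP⟩ := hc
    rw [theta_eq k ε hF hN hP, abs_of_nonneg (show (0:ℝ) ≤ ε from hε)]
    rfl
  · rw [theta0, U0]
    norm_num

lemma thetaL (k : ℝ) :
    HasDerivWithinAt (fun ε => θf (-1+ε, 1/2+k*ε))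
      ((Real.sqrt 3 * |1+2*k|)/3) (Set.Iic 0) 0 := by
  have hΘ : HasDerivAt (fun ε => Real.pi/3 + (1/3) * Real.arcsin (Ufun k ε))
      ((Real.sqrt 3 * |1+2*k|)/3) 0 := by
    have := ((hasDerivAt_arcsinU k).const_mul (1/3)).const_add (Real.pi/3)
    convert this using 1 <;> try with_reducible_and_instances rfl
    ring
  refine hΘ.hasDerivWithinAt.congr_of_eventuallyEq ?_ ?_
  · have hev := (eventually_cond k).filter_mono (nhdsWithin_le_nhds (s := Set.Iic (0:ℝ)))
    filter_upwards [hev, eventually_mem_nhdsWithin] with ε hc (hε : ε ∈ Set.Iic (0:ℝ))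
    obtain ⟨hF, hN, hP⟩ := hc
    rw [theta_eq k ε hF hN hP, show |ε| = -ε from abs_of_nonpos hε,
      show |1+2*k| * -ε * Nfun k ε / (2 * Real.sqrt ((Ffun k ε)^3)) = -(Ufun k ε) by
        unfold Ufun; ring, Real.arcsin_neg]
    ring
  · rw [theta0, U0]
    norm_num

lemma sqrtQ0 (k : ℝ) : Real.sqrt (3 * Ffun k 0) = 3/2 := by
  rw [F0, show (3:ℝ)*(3/4) = (3/2)^2 by norm_num, Real.sqrt_sq (by norm_num)]

lemma hasDerivAt_Q (k : ℝ) :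
    HasDerivAt (fun ε => Real.sqrt (3 * Ffun k ε)) (-(3/2)) 0 := by
  have h3F : HasDerivAt (fun ε => 3 * Ffun k ε) (3 * -(3/2)) 0 := (hasDerivAt_F k).const_mul 3
  have := h3F.sqrt (by rw [F0]; norm_num)
  convert this using 1 <;> try with_reducible_and_instances rfl
  rw [sqrtQ0]
  norm_num

lemma Gf_line (g : ℝ → ℝ) (k ε : ℝ) :
    Gf g (-1+ε, 1/2+k*ε) = Real.sqrt (3 * Ffun k ε) / g (θf (-1+ε, 1/2+k*ε)) := by
  unfold Gf qf
  congr 2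

end CornerAux

open CornerAux in
/-- One-sided derivatives of the restriction h(ε) = G(−1+ε, 1/2+kε) of
G = q/g(θ) to a line through the point (−1,1/2) (on the axis θ = π/3), for k ≠ −1/2:
h′±(0) = −3/(2g(π/3)) ± (√3/2)·|1+2k|·g′₋(π/3)/g(π/3)²; consequently h′₋(0) ≤ h′₊(0)
holds for every such line iff g′₋(π/3) ≥ 0. -/
theorem corner_at_theta_pi_div_three
    (g : ℝ → ℝ)
    (hgc : ContinuousOn g (Set.Icc 0 (Real.pi / 3)))
    (hgpos : ∀ t ∈ Set.Icc 0 (Real.pi / 3), 0 < g t)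
    (hgd : ∀ t ∈ Set.Ioo 0 (Real.pi / 3), DifferentiableAt ℝ g t)
    (gd0 gdpi : ℝ)
    (h0 : HasDerivWithinAt g gd0 (Set.Ici 0) 0)
    (hpi : HasDerivWithinAt g gdpi (Set.Iic (Real.pi / 3)) (Real.pi / 3))
    (k : ℝ) (hk : k ≠ -1 / 2) :
    HasDerivWithinAt (fun ε : ℝ => Gf g (-1 + ε, 1 / 2 + k * ε))
      (-3 / (2 * g (Real.pi / 3))
        + (Real.sqrt 3 / 2) * |1 + 2 * k| * gdpi / (g (Real.pi / 3)) ^ 2)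
      (Set.Ici 0) 0 ∧
    HasDerivWithinAt (fun ε : ℝ => Gf g (-1 + ε, 1 / 2 + k * ε))
      (-3 / (2 * g (Real.pi / 3))
        - (Real.sqrt 3 / 2) * |1 + 2 * k| * gdpi / (g (Real.pi / 3)) ^ 2)
      (Set.Iic 0) 0 ∧
    ((∀ k' : ℝ, k' ≠ -1 / 2 →
        -3 / (2 * g (Real.pi / 3))
          - (Real.sqrt 3 / 2) * |1 + 2 * k'| * gdpi / (g (Real.pi / 3)) ^ 2 ≤
        -3 / (2 * g (Real.pi / 3))
          + (Real.sqrt 3 / 2) * |1 + 2 * k'| * gdpi / (g (Real.pi / 3)) ^ 2) ↔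
      0 ≤ gdpi) := by
  have hpi3pos : (0:ℝ) < Real.pi/3 := by positivity
  have hg3 : 0 < g (Real.pi/3) := hgpos _ ⟨le_of_lt hpi3pos, le_refl _⟩
  have hpi' : HasDerivWithinAt g gdpi (Set.Iic (Real.pi/3)) (θf (-1+(0:ℝ), 1/2+k*0)) := by
    rw [theta0]; exact hpi
  have hval0 : g (θf (-1+(0:ℝ), 1/2+k*0)) ≠ 0 := by rw [theta0]; exact hg3.ne'
  have h3 : (0:ℝ) < Real.sqrt 3 := Real.sqrt_pos.2 (by norm_num)
  refine ⟨?_, ?_, ?_⟩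
  · -- right derivative
    have hgθR : HasDerivWithinAt (fun ε => g (θf (-1+ε, 1/2+k*ε)))
        (gdpi * (-(Real.sqrt 3*|1+2*k|)/3)) (Set.Ici 0) 0 := by
      have := HasDerivWithinAt.comp (x := (0:ℝ)) hpi' (thetaR k)
        (fun x _ => theta_le _)
      simpa [Function.comp_def] using this
    have hdivR := ((hasDerivAt_Q k).hasDerivWithinAt).fun_div hgθR hval0
    have := hdivR.congr (fun x _ => (Gf_line g k x)) (Gf_line g k 0)
    convert this using 1 <;> try with_reducible_and_instances rfl
    rw [theta0, sqrtQ0]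
    field_simp
    ring
  · -- left derivative
    have hgθL : HasDerivWithinAt (fun ε => g (θf (-1+ε, 1/2+k*ε)))
        (gdpi * ((Real.sqrt 3*|1+2*k|)/3)) (Set.Iic 0) 0 := by
      have := HasDerivWithinAt.comp (x := (0:ℝ)) hpi' (thetaL k)
        (fun x _ => theta_le _)
      simpa [Function.comp_def] using this
    have hdivL := ((hasDerivAt_Q k).hasDerivWithinAt).fun_div hgθL hval0
    have := hdivL.congr (fun x _ => (Gf_line g k x)) (Gf_line g k 0)
    convert this using 1 <;> try with_reducible_and_instances rfl
    rw [theta0, sqrtQ0]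
    field_simp
  · constructor
    · intro H
      by_contra hneg
      push_neg at hneg
      have h2 := H 0 (by norm_num)
      have habs : |1+2*(0:ℝ)| = 1 := by norm_num
      rw [habs] at h2
      have hterm : (Real.sqrt 3/2) * 1 * gdpi / (g (Real.pi/3))^2 < 0 := by
        apply div_neg_of_neg_of_pos
        · nlinarith
        · positivity
      linarith
    · intro hge k' _
      have : 0 ≤ (Real.sqrt 3/2) * |1+2*k'| * gdpi / (g (Real.pi/3))^2 :=
        div_nonneg (mul_nonneg (mul_nonneg (by positivity) (abs_nonneg _)) hge) (by positivity)
      linarith
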